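/- Let 1 ≤ u ≤ w be integers. Then Σ_{ζ=1}^{u} C(u,ζ) · Σ_{ξ=ζ}^{w} C(w,ξ) · min(ζ,ξ) ≥ (u/8) · 2^(u+w). -/

import Mathlib

open Finset

/-- Reflection: the tail sum of binomial coefficients equals a head sum. -/
lemma tail_refl (m c : ℕ) :
    ∑ j ∈ Ico c (m + 1), m.choose j = ∑ j ∈ Ico 0 (m + 1 - c), m.choose j := by
  have h1 : ∑ j ∈ Ico c (m + 1), m.choose j = ∑ j ∈ Ico c (m + 1), m.choose (m - j) := by
    refine Finset.sum_congr rfl fun j hj => ?_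
    rw [Finset.mem_Ico] at hj
    rw [Nat.choose_symm (by omega)]
  rw [h1, Finset.sum_Ico_reflect _ _ le_rfl]
  simp

/-- Head half of binomial sums is at least half of `2^m`. -/
lemma head_half (m : ℕ) : 2 ^ m ≤ 2 * ∑ j ∈ Finset.range (m / 2 + 1), m.choose j := by
  have hsplit : ∑ j ∈ Ico 0 (m / 2 + 1), m.choose j + ∑ j ∈ Ico (m / 2 + 1) (m + 1), m.choose j
      = ∑ j ∈ Ico 0 (m + 1), m.choose j :=
    Finset.sum_Ico_consecutive _ (by omega) (by omega)
  have htail : ∑ j ∈ Ico (m / 2 + 1) (m + 1), m.choose j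
      ≤ ∑ j ∈ Ico 0 (m / 2 + 1), m.choose j := by
    rw [tail_refl m (m / 2 + 1)]
    apply Finset.sum_le_sum_of_subset
    apply Finset.Ico_subset_Ico le_rfl
    omega
  have htotal : ∑ j ∈ Ico 0 (m + 1), m.choose j = 2 ^ m := by
    rw [Nat.Ico_zero_eq_range]
    exact Nat.sum_range_choose m
  rw [← Nat.Ico_zero_eq_range]
  omega

/-- Tail from at most the middle dominates the head half sum. -/
lemma tail_ge (w c : ℕ) (hc : c ≤ (w + 1) / 2) :
    ∑ j ∈ Finset.range (w / 2 + 1), w.choose j ≤ ∑ ξ ∈ Icc c w, w.choose ξ := by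
  have h2 : ∑ ξ ∈ Icc ((w + 1) / 2) w, w.choose ξ
      = ∑ j ∈ Finset.range (w / 2 + 1), w.choose j := by
    rw [← Finset.Ico_add_one_right_eq_Icc, tail_refl w ((w + 1) / 2)]
    have : w + 1 - (w + 1) / 2 = w / 2 + 1 := by omega
    rw [this, Nat.Ico_zero_eq_range]
  rw [← h2]
  exact Finset.sum_le_sum_of_subset (Finset.Icc_subset_Icc hc le_rfl)

/-- The weighted head sum identity. -/
lemma weighted_head (u K : ℕ) (hu : 1 ≤ u) :
    ∑ ζ ∈ Icc 1 K, u.choose ζ * ζ = u * ∑ j ∈ Finset.range K, (u - 1).choose j := by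
  rw [← Finset.Ico_add_one_right_eq_Icc, Finset.sum_Ico_eq_sum_range, Finset.mul_sum]
  have hK : K + 1 - 1 = K := by omega
  rw [hK]
  refine Finset.sum_congr rfl fun j _ => ?_
  obtain ⟨n, rfl⟩ : ∃ n, u = n + 1 := ⟨u - 1, by omega⟩
  have h := Nat.add_one_mul_choose_eq n j
  simp only [Nat.succ_eq_add_one, Nat.add_sub_cancel] at h ⊢
  rw [Nat.add_comm 1 j]
  omega

/-- The main inequality in natural numbers. -/
lemma nat_main (u w : ℕ) (hu : 1 ≤ u) (huw : u ≤ w) :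
    u * 2 ^ (u + w) ≤
      8 * ∑ ζ ∈ Icc 1 u, u.choose ζ * ∑ ξ ∈ Icc ζ w, w.choose ξ * min ζ ξ := by
  set K := (u + 1) / 2 with hK
  have hKu : K ≤ u := by omega
  set Hw := ∑ j ∈ Finset.range (w / 2 + 1), w.choose j with hHw
  set Hu := ∑ j ∈ Finset.range ((u - 1) / 2 + 1), (u - 1).choose j with hHu
  -- restrict outer sum
  have hsub : ∑ ζ ∈ Icc 1 K, u.choose ζ * ∑ ξ ∈ Icc ζ w, w.choose ξ * min ζ ξ
      ≤ ∑ ζ ∈ Icc 1 u, u.choose ζ * ∑ ξ ∈ Icc ζ w, w.choose ξ * min ζ ξ :=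
    Finset.sum_le_sum_of_subset (Finset.Icc_subset_Icc le_rfl hKu)
  -- lower bound each term
  have hterm : ∀ ζ ∈ Icc 1 K, u.choose ζ * ζ * Hw
      ≤ u.choose ζ * ∑ ξ ∈ Icc ζ w, w.choose ξ * min ζ ξ := by
    intro ζ hζ
    rw [Finset.mem_Icc] at hζ
    have hmin : ∑ ξ ∈ Icc ζ w, w.choose ξ * min ζ ξ = ζ * ∑ ξ ∈ Icc ζ w, w.choose ξ := by
      rw [Finset.mul_sum]
      refine Finset.sum_congr rfl fun ξ hξ => ?_
      rw [Finset.mem_Icc] at hξ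
      rw [min_eq_left hξ.1, Nat.mul_comm]
    rw [hmin, ← Nat.mul_assoc]
    apply Nat.mul_le_mul_left
    exact tail_ge w ζ (by omega)
  have hsum : ∑ ζ ∈ Icc 1 K, u.choose ζ * ζ * Hw
      ≤ ∑ ζ ∈ Icc 1 K, u.choose ζ * ∑ ξ ∈ Icc ζ w, w.choose ξ * min ζ ξ :=
    Finset.sum_le_sum hterm
  have hid : ∑ ζ ∈ Icc 1 K, u.choose ζ * ζ * Hw = u * Hu * Hw := by
    rw [← Finset.sum_mul, weighted_head u K hu]
    have : K = (u - 1) / 2 + 1 := by omega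
    rw [this, ← hHu]
  have h1 := head_half w
  have h2 := head_half (u - 1)
  rw [← hHw] at h1
  rw [← hHu] at h2
  -- 8 * u * Hu * Hw ≥ u * 2^(u+w)
  have hpow : 2 ^ (u + w) = 2 ^ (u - 1) * 2 ^ w * 2 := by
    rw [← pow_add, ← pow_succ]
    congr 1
    omega
  have hfinal : u * 2 ^ (u + w) ≤ 8 * (u * Hu * Hw) := by
    calc u * 2 ^ (u + w) = u * (2 ^ (u - 1) * 2 ^ w) * 2 := by rw [hpow]; ring
      _ ≤ u * ((2 * Hu) * (2 * Hw)) * 2 := by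
          apply Nat.mul_le_mul_right
          apply Nat.mul_le_mul_left
          exact Nat.mul_le_mul h2 h1
      _ = 8 * (u * Hu * Hw) := by ring
  calc u * 2 ^ (u + w) ≤ 8 * (u * Hu * Hw) := hfinal
    _ = 8 * ∑ ζ ∈ Icc 1 K, u.choose ζ * ζ * Hw := by rw [hid]
    _ ≤ 8 * ∑ ζ ∈ Icc 1 K, u.choose ζ * ∑ ξ ∈ Icc ζ w, w.choose ξ * min ζ ξ :=
        Nat.mul_le_mul_left _ hsum
    _ ≤ _ := Nat.mul_le_mul_left _ hsub

theorem double_sum_choose_min_ge (u w : ℕ) (hu : 1 ≤ u) (huw : u ≤ w) :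
    (u : ℝ) / 8 * 2 ^ (u + w) ≤
      ∑ ζ ∈ Finset.Icc 1 u, (u.choose ζ : ℝ) *
        ∑ ξ ∈ Finset.Icc ζ w, (w.choose ξ : ℝ) * (min ζ ξ : ℕ) := by
  have h := nat_main u w hu huw
  have hcast : ((u * 2 ^ (u + w) : ℕ) : ℝ)
      ≤ ((8 * ∑ ζ ∈ Icc 1 u, u.choose ζ * ∑ ξ ∈ Icc ζ w, w.choose ξ * min ζ ξ : ℕ) : ℝ) := by
    exact_mod_cast h
  push_cast at hcast
  rw [div_mul_eq_mul_div, div_le_iff₀ (by norm_num : (0:ℝ) < 8)]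
  calc (u : ℝ) * 2 ^ (u + w) ≤ 8 * ∑ ζ ∈ Icc 1 u, (u.choose ζ : ℝ) *
        ∑ ξ ∈ Icc ζ w, (w.choose ξ : ℝ) * (min ζ ξ : ℕ) := by
        convert hcast using 3 with ζ hζ
        push_cast
        ring_nf
    _ = _ := by ring
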